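/- For 0 < r ≤ 1, α > 0, and positive reals A, B: ∫_0^1 t^{α-1} (t A^r + (1-t) B^r)^{1/r} dt ≤ [(1/(α+1/r))^r A^r + B(α,(r+1)/r)^r B^r]^{1/r}, where B(·,·) is the Beta function. -/

import Mathlib

open MeasureTheory Set
open scoped ENNReal

theorem minkowski_beta_inequality (α r A B : ℝ)
    (hα : 0 < α) (hr0 : 0 < r) (hr1 : r ≤ 1) (hA : 0 < A) (hB : 0 < B) :
    (∫ t in (0:ℝ)..1, t ^ (α - 1) * (t * A ^ r + (1 - t) * B ^ r) ^ (1 / r)) ≤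
      ((1 / (α + 1 / r)) ^ r * A ^ r +
        (∫ t in (0:ℝ)..1, t ^ (α - 1) * (1 - t) ^ ((r + 1) / r - 1)) ^ r * B ^ r) ^ (1 / r) := by
  have hrne : r ≠ 0 := ne_of_gt hr0
  have hr' : (0:ℝ) < 1/r := by positivity
  have hp1 : (1:ℝ) ≤ 1/r := by rw [le_div_iff₀ hr0]; linarith
  have hαr : (0:ℝ) < α + 1/r := by positivity
  have hrexp : (r+1)/r - 1 = 1/r := by field_simp; ring
  have hrr : r * (1/r) = 1 := by field_simp
  rw [hrexp]
  set f : ℝ → ℝ≥0∞ := fun t => ENNReal.ofReal (t ^ ((α-1)*r) * (t * A^r)) with hfdef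
  set g : ℝ → ℝ≥0∞ := fun t => ENNReal.ofReal (t ^ ((α-1)*r) * ((1-t) * B^r)) with hgdef
  have mf : Measurable f :=
    ((measurable_id.pow measurable_const).mul
      (measurable_id.mul measurable_const)).ennreal_ofReal
  have mg : Measurable g :=
    ((measurable_id.pow measurable_const).mul
      ((measurable_const.sub measurable_id).mul measurable_const)).ennreal_ofReal
  -- pointwise identities on s
  have hptf : ∀ t ∈ Set.Ioc (0:ℝ) 1, f t ^ (1/r) = ENNReal.ofReal (t ^ (α - 1 + 1/r) * A) := by
    intro t ht
    have ht0 : 0 < t := ht.1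
    have e1 : (t^((α-1)*r))^(1/r) = t^(α-1) := by
      rw [← Real.rpow_mul ht0.le]; congr 1; field_simp
    have e2 : (A^r)^(1/r) = A := by
      rw [← Real.rpow_mul hA.le, hrr, Real.rpow_one]
    rw [hfdef, ENNReal.ofReal_rpow_of_nonneg (by positivity) hr'.le]
    congr 1
    rw [Real.mul_rpow (by positivity) (by positivity),
      Real.mul_rpow ht0.le (by positivity), e1, e2, ← mul_assoc,
      ← Real.rpow_add ht0]
  have hptg : ∀ t ∈ Set.Ioc (0:ℝ) 1, g t ^ (1/r) = ENNReal.ofReal (t ^ (α - 1) * (1-t) ^ (1/r) * B) := by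
    intro t ht
    have ht0 : 0 < t := ht.1
    have ht1 : (0:ℝ) ≤ 1 - t := by simp [ht.2]
    have e1 : (t^((α-1)*r))^(1/r) = t^(α-1) := by
      rw [← Real.rpow_mul ht0.le]; congr 1; field_simp
    have e2 : (B^r)^(1/r) = B := by
      rw [← Real.rpow_mul hB.le, hrr, Real.rpow_one]
    rw [hgdef, ENNReal.ofReal_rpow_of_nonneg (by positivity) hr'.le]
    congr 1
    rw [Real.mul_rpow (by positivity) (by positivity),
      Real.mul_rpow ht1 (by positivity), e1, e2, ← mul_assoc]
  have hptsum : ∀ t ∈ Set.Ioc (0:ℝ) 1, (f t + g t) ^ (1/r)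
      = ENNReal.ofReal (t ^ (α-1) * (t * A^r + (1-t) * B^r) ^ (1/r)) := by
    intro t ht
    have ht0 : 0 < t := ht.1
    have ht1 : (0:ℝ) ≤ 1 - t := by simp [ht.2]
    have e1 : (t^((α-1)*r))^(1/r) = t^(α-1) := by
      rw [← Real.rpow_mul ht0.le]; congr 1; field_simp
    have hadd : f t + g t
        = ENNReal.ofReal (t ^ ((α-1)*r) * (t * A^r + (1-t) * B^r)) := by
      rw [hfdef, hgdef, ← ENNReal.ofReal_add (by positivity) (by positivity), mul_add]
    rw [hadd, ENNReal.ofReal_rpow_of_nonneg (by positivity) hr'.le]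
    congr 1
    rw [Real.mul_rpow (by positivity) (by positivity), e1]
  -- integrability of the comparison functions
  have hi1 : IntegrableOn (fun t => t ^ (α - 1 + 1/r) * A) (Set.Ioc (0:ℝ) 1) volume := by
    have := (intervalIntegral.intervalIntegrable_rpow' (a:=0) (b:=1)
      (show (-1:ℝ) < α - 1 + 1/r by linarith)).mul_const A
    rwa [intervalIntegrable_iff_integrableOn_Ioc_of_le zero_le_one] at this
  have hibase : IntegrableOn (fun t => t ^ (α - 1) * B) (Set.Ioc (0:ℝ) 1) volume := by
    have := (intervalIntegral.intervalIntegrable_rpow' (a:=0) (b:=1)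
      (show (-1:ℝ) < α - 1 by linarith)).mul_const B
    rwa [intervalIntegrable_iff_integrableOn_Ioc_of_le zero_le_one] at this
  have m2 : Measurable fun t : ℝ => t ^ (α - 1) * (1-t) ^ (1/r) * B :=
    ((measurable_id.pow measurable_const).mul
      ((measurable_const.sub measurable_id).pow measurable_const)).mul measurable_const
  have hi2 : IntegrableOn (fun t => t ^ (α - 1) * (1-t) ^ (1/r) * B) (Set.Ioc (0:ℝ) 1) volume := by
    refine Integrable.mono' hibase (m2.aestronglyMeasurable.restrict) ?_
    rw [ae_restrict_iff' measurableSet_Ioc]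
    refine ae_of_all _ fun t ht => ?_
    have ht0 : 0 < t := ht.1
    have ht1 : (0:ℝ) ≤ 1 - t := by simp [ht.2]
    rw [Real.norm_of_nonneg (by positivity)]
    have : (1-t) ^ (1/r) ≤ 1 := Real.rpow_le_one ht1 (by linarith [ht.1]) hr'.le
    calc t ^ (α - 1) * (1-t) ^ (1/r) * B ≤ t ^ (α - 1) * 1 * B := by
          apply mul_le_mul_of_nonneg_right _ hB.le
          exact mul_le_mul_of_nonneg_left this (by positivity)
      _ = t ^ (α - 1) * B := by ring
  -- nonnegativity
  have hnn1 : 0 ≤ᵐ[volume.restrict (Set.Ioc (0:ℝ) 1)] fun t => t ^ (α - 1 + 1/r) * A := by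
    filter_upwards [self_mem_ae_restrict measurableSet_Ioc] with t ht
    have ht0 : 0 < t := ht.1
    simp only [Pi.zero_apply]
    positivity
  have hnn2 : 0 ≤ᵐ[volume.restrict (Set.Ioc (0:ℝ) 1)] fun t => t ^ (α - 1) * (1-t) ^ (1/r) * B := by
    filter_upwards [self_mem_ae_restrict measurableSet_Ioc] with t ht
    have ht0 : 0 < t := ht.1
    have ht1 : (0:ℝ) ≤ 1 - t := by simp [ht.2]
    simp only [Pi.zero_apply]
    positivity
  -- lintegral identities
  have e1 : (∫⁻ t in Set.Ioc (0:ℝ) 1, f t ^ (1/r)) = ENNReal.ofReal (∫ t in Set.Ioc (0:ℝ) 1, t ^ (α - 1 + 1/r) * A) := by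
    rw [ofReal_integral_eq_lintegral_ofReal hi1 hnn1]
    exact setLIntegral_congr_fun measurableSet_Ioc hptf
  have e2 : (∫⁻ t in Set.Ioc (0:ℝ) 1, g t ^ (1/r))
      = ENNReal.ofReal (∫ t in Set.Ioc (0:ℝ) 1, t ^ (α - 1) * (1-t) ^ (1/r) * B) := by
    rw [ofReal_integral_eq_lintegral_ofReal hi2 hnn2]
    exact setLIntegral_congr_fun measurableSet_Ioc hptg
  -- Minkowski
  have hmink := ENNReal.lintegral_Lp_add_le (μ := volume.restrict (Set.Ioc (0:ℝ) 1))
    mf.aemeasurable mg.aemeasurable hp1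
  rw [one_div_one_div] at hmink
  have key : (∫⁻ t in Set.Ioc (0:ℝ) 1, (f t + g t) ^ (1/r))
      ≤ ((∫⁻ t in Set.Ioc (0:ℝ) 1, f t ^ (1/r)) ^ r + (∫⁻ t in Set.Ioc (0:ℝ) 1, g t ^ (1/r)) ^ r) ^ (1/r) := by
    have h2 := ENNReal.rpow_le_rpow hmink hr'.le
    rw [← ENNReal.rpow_mul, hrr, ENNReal.rpow_one] at h2
    simpa using h2
  rw [e1, e2] at key
  -- convert LHS
  have eL : (∫ t in (0:ℝ)..1, t ^ (α-1) * (t * A^r + (1-t) * B^r) ^ (1/r))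
      = (∫⁻ t in Set.Ioc (0:ℝ) 1, (f t + g t) ^ (1/r)).toReal := by
    rw [intervalIntegral.integral_of_le zero_le_one]
    have mφ : Measurable fun t : ℝ => t ^ (α-1) * (t * A^r + (1-t) * B^r) ^ (1/r) :=
      (measurable_id.pow measurable_const).mul
        (((measurable_id.mul measurable_const).add
          ((measurable_const.sub measurable_id).mul measurable_const)).pow measurable_const)
    have hnnφ : 0 ≤ᵐ[volume.restrict (Set.Ioc (0:ℝ) 1)]
        fun t => t ^ (α-1) * (t * A^r + (1-t) * B^r) ^ (1/r) := by
      filter_upwards [self_mem_ae_restrict measurableSet_Ioc] with t ht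
      have ht0 : 0 < t := ht.1
      have ht1 : (0:ℝ) ≤ 1 - t := by simp [ht.2]
      simp only [Pi.zero_apply]
      positivity
    rw [integral_eq_lintegral_of_nonneg_ae hnnφ mφ.aestronglyMeasurable.restrict]
    congr 1
    exact setLIntegral_congr_fun measurableSet_Ioc
      (fun t ht => (hptsum t ht).symm)
  -- values of the two integrals
  have hJ1 : (∫ t in Set.Ioc (0:ℝ) 1, t ^ (α - 1 + 1/r) * A) = (1/(α + 1/r)) * A := by
    rw [← intervalIntegral.integral_of_le zero_le_one, intervalIntegral.integral_mul_const]
    congr 1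
    rw [integral_rpow (Or.inl (by linarith))]
    rw [show α - 1 + 1/r + 1 = α + 1/r by ring, Real.one_rpow,
      Real.zero_rpow (ne_of_gt hαr), sub_zero]
  have hJ2 : (∫ t in Set.Ioc (0:ℝ) 1, t ^ (α - 1) * (1-t) ^ (1/r) * B)
      = (∫ t in (0:ℝ)..1, t ^ (α - 1) * (1-t) ^ (1/r)) * B := by
    rw [← intervalIntegral.integral_of_le zero_le_one, intervalIntegral.integral_mul_const]
  have hbetann : 0 ≤ ∫ t in (0:ℝ)..1, t ^ (α - 1) * (1-t) ^ (1/r) := by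
    apply intervalIntegral.integral_nonneg zero_le_one
    intro t ht
    have : (0:ℝ) ≤ t := ht.1
    have : (0:ℝ) ≤ 1 - t := by simp [ht.2]
    positivity
  -- put it together
  rw [eL]
  have hfin : ((ENNReal.ofReal ((1/(α + 1/r)) * A)) ^ r
      + (ENNReal.ofReal ((∫ t in (0:ℝ)..1, t ^ (α - 1) * (1-t) ^ (1/r)) * B)) ^ r) ^ (1/r) ≠ ⊤ := by
    apply ENNReal.rpow_ne_top_of_nonneg hr'.le
    exact ENNReal.add_ne_top.2 ⟨ENNReal.rpow_ne_top_of_nonneg hr0.le ENNReal.ofReal_ne_top,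
      ENNReal.rpow_ne_top_of_nonneg hr0.le ENNReal.ofReal_ne_top⟩
  rw [hJ1, hJ2] at key
  refine le_trans (ENNReal.toReal_mono hfin key) (le_of_eq ?_)
  rw [← ENNReal.toReal_rpow]
  congr 1
  rw [ENNReal.toReal_add (ENNReal.rpow_ne_top_of_nonneg hr0.le ENNReal.ofReal_ne_top)
    (ENNReal.rpow_ne_top_of_nonneg hr0.le ENNReal.ofReal_ne_top),
    ← ENNReal.toReal_rpow, ← ENNReal.toReal_rpow,
    ENNReal.toReal_ofReal (by positivity), ENNReal.toReal_ofReal (by positivity)]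
  rw [Real.mul_rpow (by positivity) hA.le, Real.mul_rpow hbetann hB.le]
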